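/- Each Burau matrix ρ(σ_i) ∈ GL(n, ℤ) fixes the vector v_n = e₁ + e₂ + ⋯ + e_n, satisfies w_nᵀ ρ(σ_i) = w_nᵀ for w_n = e₁ − e₂ + ⋯ + (−1)^{n−1} e_n, and preserves the alternating bilinear form on ℤⁿ defined by ⟨e_i, e_j⟩ = (−1)^{i+j+1} for i < j, ⟨e_i, e_i⟩ = 0, and ⟨e_i, e_j⟩ = (−1)^{i+j} for i > j. -/

import Mathlib

open Matrix

/-- The Gram matrix of the alternating bilinear form on `ℤⁿ` with
`⟨e_i, e_j⟩ = (−1)^{i+j+1}` for `i < j`, `0` for `i = j`, and `(−1)^{i+j}` for `i > j`. -/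
def altJ (n : ℕ) : Matrix (Fin n) (Fin n) ℤ :=
  Matrix.of fun i j =>
    if (i : ℕ) < (j : ℕ) then (-1) ^ ((i : ℕ) + (j : ℕ) + 1)
    else if (i : ℕ) = (j : ℕ) then 0
    else (-1) ^ ((i : ℕ) + (j : ℕ))

/-- The alternating bilinear form `⟨v, w⟩` on `ℤⁿ`. -/
def altForm (n : ℕ) (v w : Fin n → ℤ) : ℤ := v ⬝ᵥ (altJ n).mulVec w

/-- The vector `v_n = e₁ + ⋯ + e_n`. -/
def vVec (n : ℕ) : Fin n → ℤ := fun _ => 1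

/-- The vector `w_n = e₁ − e₂ + ⋯ + (−1)^{n−1} e_n`. -/
def wVec (n : ℕ) : Fin n → ℤ := fun i => (-1) ^ (i : ℕ)

/-- The integral Burau matrix of the Artin generator `σ_{i+1}` (rows and columns `i`, `i+1`
in 0-indexed notation): the identity matrix with the block `[[2, -1], [1, 0]]` inserted. -/
def burauMat (n : ℕ) (i : ℕ) : Matrix (Fin n) (Fin n) ℤ :=
  Matrix.of fun j k =>
    if (j : ℕ) = i ∧ (k : ℕ) = i then 2
    else if (j : ℕ) = i ∧ (k : ℕ) = i + 1 then -1
    else if (j : ℕ) = i + 1 ∧ (k : ℕ) = i then 1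
    else if (j : ℕ) = i + 1 ∧ (k : ℕ) = i + 1 then 0
    else if j = k then 1 else 0

namespace BurauAux

variable {n : ℕ}

lemma vecMulVec_mulVec' (u v x : Fin n → ℤ) : (vecMulVec u v) *ᵥ x = (v ⬝ᵥ x) • u := by
  funext j
  simp [vecMulVec, mulVec, dotProduct, Finset.mul_sum, mul_assoc, mul_comm, mul_left_comm]

lemma vecMul_vecMulVec' (u v w : Fin n → ℤ) : w ᵥ* (vecMulVec u v) = (w ⬝ᵥ u) • v := by
  funext k
  simp [vecMulVec, vecMul, dotProduct, Finset.sum_mul, mul_assoc]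

lemma mul_vecMulVec' (M : Matrix (Fin n) (Fin n) ℤ) (u v : Fin n → ℤ) :
    M * vecMulVec u v = vecMulVec (M *ᵥ u) v := by
  ext j k
  simp [vecMulVec, mul_apply, mulVec, dotProduct, Finset.sum_mul, mul_assoc]

lemma vecMulVec_mul' (M : Matrix (Fin n) (Fin n) ℤ) (u v : Fin n → ℤ) :
    vecMulVec u v * M = vecMulVec u (v ᵥ* M) := by
  ext j k
  simp [vecMulVec, mul_apply, vecMul, dotProduct, Finset.mul_sum, mul_assoc]

lemma vecMulVec_transpose' (u v : Fin n → ℤ) : (vecMulVec u v)ᵀ = vecMulVec v u := by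
  ext j k; simp [vecMulVec, mul_comm]

lemma vecMulVec_neg_right (u v : Fin n → ℤ) : vecMulVec u (-v) = -vecMulVec u v := by
  ext j k; simp [vecMulVec]

variable (n) in
/-- `u = e_i + e_{i+1}` -/
def uvec (i : ℕ) (hi : i + 1 < n) : Fin n → ℤ :=
  Pi.single ⟨i, Nat.lt_of_succ_lt hi⟩ 1 + Pi.single ⟨i + 1, hi⟩ 1

variable (n) in
/-- `v = e_i - e_{i+1}` -/
def vvec (i : ℕ) (hi : i + 1 < n) : Fin n → ℤ :=
  Pi.single ⟨i, Nat.lt_of_succ_lt hi⟩ 1 - Pi.single ⟨i + 1, hi⟩ 1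

lemma burau_decomp (i : ℕ) (hi : i + 1 < n) :
    burauMat n i = 1 + vecMulVec (uvec n i hi) (vvec n i hi) := by
  ext j k
  simp only [burauMat, uvec, vvec, Matrix.of_apply, Matrix.add_apply, Matrix.one_apply,
    vecMulVec_apply, Pi.add_apply, Pi.sub_apply, Pi.single_apply, Fin.ext_iff]
  by_cases h1 : (j : ℕ) = i <;> by_cases h2 : (k : ℕ) = i <;>
    by_cases h3 : (j : ℕ) = i + 1 <;> by_cases h4 : (k : ℕ) = i + 1 <;>
    simp [h1, h2, h3, h4, eq_comm]

lemma altJ_mulVec_u (i : ℕ) (hi : i + 1 < n) :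
    (altJ n) *ᵥ (uvec n i hi) = vvec n i hi := by
  funext k
  simp only [uvec, mulVec_add, mulVec_single, Pi.add_apply, Pi.smul_apply, Matrix.col_apply,
    op_smul_eq_mul, mul_one]
  have hk := k.isLt
  rcases lt_trichotomy (k : ℕ) i with h | h | h
  · have h' : (k : ℕ) < i + 1 := by omega
    simp only [altJ, Matrix.of_apply, vvec, Pi.sub_apply, Pi.single_apply, Fin.ext_iff]
    rw [if_pos h, if_pos h']
    have : (k : ℕ) + (i + 1) + 1 = ((k : ℕ) + i + 1) + 1 := by omega
    rw [this, pow_succ]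
    simp only [if_neg (by omega : ¬ (k : ℕ) = i), if_neg (by omega : ¬ (k : ℕ) = i + 1)]
    ring
  · simp only [altJ, Matrix.of_apply, vvec, Pi.sub_apply, Pi.single_apply, Fin.ext_iff, h]
    norm_num [show ¬ i = i + 1 by omega,
      Even.neg_one_pow (show Even (i + (i + 1) + 1) from ⟨i + 1, by omega⟩)]
  · rcases Nat.lt_or_ge (i + 1) (k : ℕ) with h' | h'
    · simp only [altJ, Matrix.of_apply, vvec, Pi.sub_apply, Pi.single_apply, Fin.ext_iff]
      rw [if_neg (by omega), if_neg (by omega), if_neg (by omega), if_neg (by omega)]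
      simp only [if_neg (by omega : ¬ (k : ℕ) = i), if_neg (by omega : ¬ (k : ℕ) = i + 1)]
      have : (k : ℕ) + (i + 1) = ((k : ℕ) + i) + 1 := by omega
      rw [this, pow_succ]
      ring
    · have hk' : (k : ℕ) = i + 1 := by omega
      simp only [altJ, Matrix.of_apply, vvec, Pi.sub_apply, Pi.single_apply, Fin.ext_iff, hk']
      norm_num [show ¬ i + 1 < i by omega, show ¬ i + 1 = i by omega,
        Odd.neg_one_pow (show Odd (i + 1 + i) from ⟨i, by omega⟩)]

lemma u_vecMul_altJ (i : ℕ) (hi : i + 1 < n) :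
    (uvec n i hi) ᵥ* (altJ n) = -(vvec n i hi) := by
  funext k
  simp only [uvec, add_vecMul, single_vecMul, Pi.add_apply, Pi.smul_apply, Matrix.row_apply,
    smul_eq_mul, one_mul]
  have hk := k.isLt
  rcases lt_trichotomy (k : ℕ) i with h | h | h
  · simp only [altJ, Matrix.of_apply, vvec, Pi.neg_apply, Pi.sub_apply, Pi.single_apply,
      Fin.ext_iff]
    rw [if_neg (by omega), if_neg (by omega), if_neg (by omega), if_neg (by omega)]
    simp only [if_neg (by omega : ¬ (k : ℕ) = i), if_neg (by omega : ¬ (k : ℕ) = i + 1)]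
    have : i + 1 + (k : ℕ) = (i + (k : ℕ)) + 1 := by omega
    rw [this, pow_succ]
    ring
  · simp only [altJ, Matrix.of_apply, vvec, Pi.neg_apply, Pi.sub_apply, Pi.single_apply,
      Fin.ext_iff, h]
    norm_num [show ¬ i + 1 < i by omega, show ¬ i + 1 = i by omega, show ¬ i = i + 1 by omega,
      Odd.neg_one_pow (show Odd (i + 1 + i) from ⟨i, by omega⟩)]
  · rcases Nat.lt_or_ge (i + 1) (k : ℕ) with h' | h'
    · simp only [altJ, Matrix.of_apply, vvec, Pi.neg_apply, Pi.sub_apply, Pi.single_apply,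
        Fin.ext_iff]
      rw [if_pos (by omega), if_pos (by omega)]
      simp only [if_neg (by omega : ¬ (k : ℕ) = i), if_neg (by omega : ¬ (k : ℕ) = i + 1)]
      have : i + (k : ℕ) + 1 = (i + 1 + (k : ℕ) + 1) - 1 := by omega
      have h2 : i + 1 + (k : ℕ) + 1 = (i + (k : ℕ) + 1) + 1 := by omega
      rw [h2, pow_succ]
      ring
    · have hk' : (k : ℕ) = i + 1 := by omega
      simp only [altJ, Matrix.of_apply, vvec, Pi.neg_apply, Pi.sub_apply, Pi.single_apply,
        Fin.ext_iff, hk']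
      norm_num [show ¬ i + 1 = i by omega,
        Even.neg_one_pow (show Even (i + (i + 1) + 1) from ⟨i + 1, by omega⟩)]

lemma v_dot_u (i : ℕ) (hi : i + 1 < n) : (vvec n i hi) ⬝ᵥ (uvec n i hi) = 0 := by
  have hne : (⟨i, Nat.lt_of_succ_lt hi⟩ : Fin n) ≠ ⟨i + 1, hi⟩ := by
    simp [Fin.ext_iff]
  simp [vvec, uvec, sub_dotProduct, dotProduct_add, dotProduct_single, single_dotProduct,
    Pi.single_apply, hne, hne.symm]

end BurauAux

open BurauAux
theorem burauMat_fixes_v_w_and_form (n : ℕ) (i : ℕ) (hi : i + 1 < n) :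
    (burauMat n i).mulVec (vVec n) = vVec n ∧
    Matrix.vecMul (wVec n) (burauMat n i) = wVec n ∧
    (burauMat n i)ᵀ * altJ n * burauMat n i = altJ n := by
  set u := uvec n i hi with hu
  set v := vvec n i hi with hv
  have hB := burau_decomp i hi
  refine ⟨?_, ?_, ?_⟩
  · rw [hB, add_mulVec, one_mulVec, vecMulVec_mulVec']
    have : v ⬝ᵥ vVec n = 0 := by
      simp [hv, vvec, vVec, sub_dotProduct, single_dotProduct]
    rw [this, zero_smul, add_zero]
  · rw [hB, vecMul_add, vecMul_one, vecMul_vecMulVec']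
    have : wVec n ⬝ᵥ u = 0 := by
      simp only [hu, uvec, dotProduct_add, dotProduct_single, mul_one, wVec]
      rw [pow_succ]
      ring
    rw [this, zero_smul, add_zero]
  · have hvz : vecMulVec (0 : Fin n → ℤ) v = 0 := by ext j k; simp [vecMulVec]
    have h1 : altJ n * vecMulVec u v = vecMulVec v v := by
      rw [mul_vecMulVec', altJ_mulVec_u]
    have h2 : vecMulVec v u * altJ n = vecMulVec v (-v) := by
      rw [vecMulVec_mul', u_vecMul_altJ]
    have hvu : (-v) ⬝ᵥ u = 0 := by rw [neg_dotProduct, v_dot_u]; ring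
    have h3 : vecMulVec v u * altJ n * vecMulVec u v = 0 := by
      rw [h2, mul_vecMulVec', vecMulVec_mulVec', hvu, zero_smul, hvz]
    rw [hB, transpose_add, transpose_one, vecMulVec_transpose']
    have expand : (1 + vecMulVec v u) * altJ n * (1 + vecMulVec u v) =
        altJ n + altJ n * vecMulVec u v + vecMulVec v u * altJ n +
          vecMulVec v u * altJ n * vecMulVec u v := by noncomm_ring
    rw [expand, h3, h1, h2, vecMulVec_neg_right, add_zero, add_assoc, add_neg_cancel, add_zero]
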